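/- Let M⁻¹ = Σ_{i=0}^N R_i^T K_i⁻¹ R_i with K_i = R_i K R_i^T SPD, and suppose there exists C₀ > 0 such that every u ∈ ℝ^n admits a decomposition u = Σ_i R_i^T u_i with Σ_i u_i^T K_i u_i ≤ C₀ u^T K u (stable decomposition). Then the smallest eigenvalue of M⁻¹K is at least 1/C₀. -/

import Mathlib

open Matrix

private lemma sum_dotProduct' {ι m : Type*} [Fintype ι] [Fintype m]
    (f : ι → (m → ℝ)) (v : m → ℝ) : (∑ i, f i) ⬝ᵥ v = ∑ i, f i ⬝ᵥ v := by
  simp only [dotProduct, Finset.sum_apply, Finset.sum_mul]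
  exact Finset.sum_comm

private lemma sum_mulVec' {ι m p : Type*} [Fintype ι] [Fintype m] [Fintype p]
    (f : ι → Matrix p m ℝ) (v : m → ℝ) : (∑ i, f i) *ᵥ v = ∑ i, f i *ᵥ v := by
  ext x
  simp only [mulVec, dotProduct, Finset.sum_apply, Matrix.sum_apply, Finset.sum_mul]
  exact Finset.sum_comm

private lemma posdef_conj {n m : ℕ} {K : Matrix (Fin n) (Fin n) ℝ} (hK : K.PosDef)
    (R : Matrix (Fin m) (Fin n) ℝ) (hR : LinearIndependent ℝ R) :
    (R * K * R.transpose).PosDef := by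
  refine Matrix.PosDef.of_dotProduct_mulVec_pos ?_ ?_
  · have := (hK.posSemidef.mul_mul_conjTranspose_same R).1
    simpa using this
  · intro x hx
    have hx' : Rᵀ *ᵥ x ≠ 0 := by
      rw [mulVec_transpose]
      intro h
      apply hx
      have hlin := Fintype.linearIndependent_iff.mp hR x ?_
      · funext j; exact hlin j
      · funext k
        have := congrFun h k
        simpa [vecMul, dotProduct, Finset.sum_apply, Pi.smul_apply] using this
    have := hK.dotProduct_mulVec_pos hx'
    simp only [star_trivial] at this ⊢
    calc (0:ℝ) < (Rᵀ *ᵥ x) ⬝ᵥ (K *ᵥ (Rᵀ *ᵥ x)) := this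
    _ = x ⬝ᵥ ((R * K * Rᵀ) *ᵥ x) := by
        rw [mulVec_mulVec, mulVec_transpose, dotProduct_mulVec, vecMul_vecMul,
          dotProduct_mulVec, Matrix.mul_assoc]

/-- Lions' lemma (stable decomposition lower bound): if every `u` admits a
decomposition `u = Σ_i R_iᵀ u_i` with `Σ_i u_iᵀ K_i u_i ≤ C₀ uᵀ K u`, then
every eigenvalue of `M⁻¹K` is at least `1/C₀`. -/
theorem additive_schwarz_lower_bound {n N : ℕ}
    (K : Matrix (Fin n) (Fin n) ℝ) (hK : K.PosDef)
    (nloc : Fin (N + 1) → ℕ)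
    (R : ∀ i : Fin (N + 1), Matrix (Fin (nloc i)) (Fin n) ℝ)
    (hR : ∀ i, LinearIndependent ℝ (R i))
    (C₀ : ℝ) (hC₀ : 0 < C₀)
    (hstable : ∀ u : Fin n → ℝ, ∃ uloc : ∀ i, Fin (nloc i) → ℝ,
      u = ∑ i, (R i).transpose *ᵥ uloc i ∧
      ∑ i, uloc i ⬝ᵥ ((R i * K * (R i).transpose) *ᵥ uloc i) ≤
        C₀ * (u ⬝ᵥ (K *ᵥ u))) :
    ∀ μ ∈ spectrum ℝ
      ((∑ i, (R i).transpose * (R i * K * (R i).transpose)⁻¹ * R i) * K),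
      1 / C₀ ≤ μ := by
  intro μ hμ
  have hKi : ∀ i, (R i * K * (R i)ᵀ).PosDef := fun i => posdef_conj hK (R i) (hR i)
  set B : Matrix (Fin n) (Fin n) ℝ :=
    ∑ i, (R i).transpose * (R i * K * (R i).transpose)⁻¹ * R i with hBdef
  -- extract an eigenvector
  have hdet : (μ • (1 : Matrix (Fin n) (Fin n) ℝ) - B * K).det = 0 := by
    rw [spectrum.mem_iff, Algebra.algebraMap_eq_smul_one] at hμ
    by_contra h
    exact hμ ((Matrix.isUnit_iff_isUnit_det _).mpr (isUnit_iff_ne_zero.mpr h))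
  obtain ⟨v, hv0, hveq⟩ := (Matrix.exists_mulVec_eq_zero_iff).mpr hdet
  have heig : (B * K) *ᵥ v = μ • v := by
    rw [sub_mulVec, sub_eq_zero] at hveq
    rw [← hveq, smul_mulVec, one_mulVec]
  have hs : 0 < v ⬝ᵥ (K *ᵥ v) := by simpa using hK.dotProduct_mulVec_pos hv0
  set s : ℝ := v ⬝ᵥ (K *ᵥ v) with hsdef
  obtain ⟨u, hdec, hbound⟩ := hstable v
  set w : ∀ i, Fin (nloc i) → ℝ :=
    fun i => (R i * K * (R i)ᵀ)⁻¹ *ᵥ (R i *ᵥ (K *ᵥ v)) with hwdef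
  have hKw : ∀ i, (R i * K * (R i)ᵀ) *ᵥ w i = R i *ᵥ (K *ᵥ v) := by
    intro i
    rw [hwdef]
    rw [mulVec_mulVec, Matrix.mul_nonsing_inv _ (isUnit_iff_ne_zero.mpr (hKi i).det_pos.ne'),
      one_mulVec]
  -- Σ uᵢᵀ Kᵢ wᵢ = s
  have hsum_uw : ∑ i, u i ⬝ᵥ ((R i * K * (R i)ᵀ) *ᵥ w i) = s := by
    calc ∑ i, u i ⬝ᵥ ((R i * K * (R i)ᵀ) *ᵥ w i)
        = ∑ i, ((R i)ᵀ *ᵥ u i) ⬝ᵥ (K *ᵥ v) := by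
          refine Finset.sum_congr rfl fun i _ => ?_
          rw [hKw i, dotProduct_mulVec, mulVec_transpose]
      _ = (∑ i, (R i)ᵀ *ᵥ u i) ⬝ᵥ (K *ᵥ v) := (sum_dotProduct' _ _).symm
      _ = s := by rw [← hdec]
  -- Σ wᵢᵀ Kᵢ wᵢ = μ s
  have hsum_ww : ∑ i, w i ⬝ᵥ ((R i * K * (R i)ᵀ) *ᵥ w i) = μ * s := by
    have h1 : ∀ i, w i ⬝ᵥ ((R i * K * (R i)ᵀ) *ᵥ w i)
        = (((R i)ᵀ * (R i * K * (R i)ᵀ)⁻¹ * R i) *ᵥ (K *ᵥ v)) ⬝ᵥ (K *ᵥ v) := by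
      intro i
      rw [hKw i, dotProduct_mulVec, ← mulVec_transpose, hwdef]
      rw [mulVec_mulVec, mulVec_mulVec, Matrix.mul_assoc]
    calc ∑ i, w i ⬝ᵥ ((R i * K * (R i)ᵀ) *ᵥ w i)
        = ∑ i, (((R i)ᵀ * (R i * K * (R i)ᵀ)⁻¹ * R i) *ᵥ (K *ᵥ v)) ⬝ᵥ (K *ᵥ v) := by
          exact Finset.sum_congr rfl fun i _ => h1 i
      _ = (B *ᵥ (K *ᵥ v)) ⬝ᵥ (K *ᵥ v) := by
          rw [hBdef, sum_mulVec', sum_dotProduct']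
      _ = (μ • v) ⬝ᵥ (K *ᵥ v) := by rw [mulVec_mulVec, heig]
      _ = μ * s := by rw [smul_dotProduct, smul_eq_mul, hsdef]
  -- symmetry of Kᵢ
  have hsymm : ∀ i (a b : Fin (nloc i) → ℝ),
      a ⬝ᵥ ((R i * K * (R i)ᵀ) *ᵥ b) = b ⬝ᵥ ((R i * K * (R i)ᵀ) *ᵥ a) := by
    intro i a b
    have hT : (R i * K * (R i)ᵀ)ᵀ = R i * K * (R i)ᵀ := by
      rw [← conjTranspose_eq_transpose_of_trivial]
      exact (hKi i).1
    rw [dotProduct_mulVec, ← mulVec_transpose, hT, dotProduct_comm]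
  -- key scalar inequality
  have key : ∀ ε : ℝ, 2 * ε * s ≤ C₀ * s + ε ^ 2 * (μ * s) := by
    intro ε
    have hterm : ∀ i, 2 * ε * (u i ⬝ᵥ ((R i * K * (R i)ᵀ) *ᵥ w i)) ≤
        u i ⬝ᵥ ((R i * K * (R i)ᵀ) *ᵥ u i) + ε ^ 2 * (w i ⬝ᵥ ((R i * K * (R i)ᵀ) *ᵥ w i)) := by
      intro i
      have hpos := (hKi i).posSemidef.dotProduct_mulVec_nonneg (ε • w i - u i)
      have hsy := hsymm i (w i) (u i)
      simp only [star_trivial, mulVec_sub, mulVec_smul, dotProduct_sub, sub_dotProduct,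
        smul_dotProduct, dotProduct_smul, smul_eq_mul] at hpos
      rw [hsy] at hpos
      nlinarith [hpos]
    have hbound' : ∑ i, u i ⬝ᵥ ((R i * K * (R i)ᵀ) *ᵥ u i) ≤ C₀ * s := by
      rw [hsdef]; exact hbound
    calc 2 * ε * s = ∑ i, 2 * ε * (u i ⬝ᵥ ((R i * K * (R i)ᵀ) *ᵥ w i)) := by
          rw [← Finset.mul_sum, hsum_uw]
      _ ≤ ∑ i, (u i ⬝ᵥ ((R i * K * (R i)ᵀ) *ᵥ u i)
            + ε ^ 2 * (w i ⬝ᵥ ((R i * K * (R i)ᵀ) *ᵥ w i))) :=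
          Finset.sum_le_sum (fun i _ => hterm i)
      _ = (∑ i, u i ⬝ᵥ ((R i * K * (R i)ᵀ) *ᵥ u i)) + ε ^ 2 * (μ * s) := by
          rw [Finset.sum_add_distrib, ← Finset.mul_sum, hsum_ww]
      _ ≤ C₀ * s + ε ^ 2 * (μ * s) := by linarith [hbound']
  -- conclude
  clear_value s
  clear hsdef hbound hsum_uw hsum_ww hKw hsymm hdec heig hveq
  have hμpos : 0 < μ := by
    by_contra h
    push_neg at h
    have h1 := key C₀
    have h5 : μ * s ≤ 0 := mul_nonpos_of_nonpos_of_nonneg h hs.le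
    have h6 : C₀ ^ 2 * (μ * s) ≤ 0 := mul_nonpos_of_nonneg_of_nonpos (sq_nonneg C₀) h5
    nlinarith [mul_pos hC₀ hs]
  have hμne : μ ≠ 0 := hμpos.ne'
  have h2 := key μ⁻¹
  have e1 : μ⁻¹ ^ 2 * (μ * s) = μ⁻¹ * s := by
    field_simp
  rw [e1] at h2
  have h4 : μ⁻¹ * s ≤ C₀ * s := by linarith
  have h6 : s ≤ C₀ * μ * s := by
    have := mul_le_mul_of_nonneg_right h4 hμpos.le
    have e2 : μ⁻¹ * s * μ = s := by field_simp
    rw [e2] at this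
    nlinarith [this]
  have h1 : 1 ≤ C₀ * μ := by nlinarith [h6, hs]
  rw [div_le_iff₀ hC₀]
  linarith
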